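/- Let Γ be a strongly induced subcomplex of Δ and let e be a valid edge of Γ. Then the edge contraction C_e(Γ) is a strongly induced subcomplex of C_e(Δ). -/
import Mathlib


open scoped Classical

namespace Fary

variable {V : Type*}

/-- A simplicial complex: a family of finite sets closed under taking subsets. -/
def IsComplex (K : Set (Finset V)) : Prop := ∀ s ∈ K, ∀ t ⊆ s, t ∈ K

/-- The star of a simplex `σ`: all subsets of simplices of `K` containing `σ`. -/
def star (σ : Finset V) (K : Set (Finset V)) : Set (Finset V) :=
  {t | ∃ ρ ∈ K, σ ⊆ ρ ∧ t ⊆ ρ}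

/-- The set of faces of a single simplex `τ`. -/
def facesOf (τ : Finset V) : Set (Finset V) := {ρ | ρ ⊆ τ}

/-- `Γ` is an induced subcomplex of `Δ`. -/
def Induced (Γ Δ : Set (Finset V)) : Prop :=
  Γ ⊆ Δ ∧ ∀ s ∈ Δ, (∀ v ∈ s, {v} ∈ Γ) → s ∈ Γ

/-- `Γ` is a strongly induced subcomplex of `Δ`: for every simplex of `Δ` not in `Γ`,
the intersection of `Γ` with its star is the set of faces of a single simplex of `Γ`. -/
def StronglyInduced (Γ Δ : Set (Finset V)) : Prop :=
  Γ ⊆ Δ ∧ ∀ σ ∈ Δ, σ ∉ Γ → ∃ τ ∈ Γ, Γ ∩ star σ Δ = facesOf τ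

/-- The derived (barycentric) subdivision: its simplices are the chains (under inclusion)
of nonempty simplices of `Δ`. -/
def derived (Δ : Set (Finset V)) : Set (Finset (Finset V)) :=
  {C | (↑C : Set (Finset V)) ⊆ {s | s ∈ Δ ∧ s.Nonempty} ∧
       IsChain (· ⊆ ·) (↑C : Set (Finset V))}

/-- The biased derived subdivision of a pair `Γ ⊆ Δ`: simplices are
`τ ∪ {v_{σ₁}, …, v_{σ_k}}` with `τ ∈ Γ`, `σ₁ ⊂ … ⊂ σ_k` simplices of `Δ` not in `Γ`
and `τ ⊆ σ₁`. Old vertices are `Sum.inl`, the new vertex `v_σ` is `Sum.inr σ`. -/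
def biased [DecidableEq V] (Γ Δ : Set (Finset V)) : Set (Finset (V ⊕ Finset V)) :=
  {t | ∃ τ ∈ Γ, ∃ C : Finset (Finset V),
    (↑C : Set (Finset V)) ⊆ {s | s ∈ Δ ∧ s ∉ Γ} ∧
    IsChain (· ⊆ ·) (↑C : Set (Finset V)) ∧
    (∀ s ∈ C, τ ⊆ s) ∧
    t = τ.image Sum.inl ∪ C.image Sum.inr}

/-- The copy of a complex `Γ` over `V` inside the vertex type `V ⊕ Finset V`. -/
def inlify [DecidableEq V] (Γ : Set (Finset V)) : Set (Finset (V ⊕ Finset V)) :=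
  {t | ∃ s ∈ Γ, t = s.image Sum.inl}

/-- The vertex map of the edge contraction identifying `b` with `a`. -/
def cmap [DecidableEq V] (a b : V) (v : V) : V := if v = b then a else v

/-- The edge contraction `C_e(K)` at `e = {a,b}`: images of simplices under `cmap a b`. -/
def contract [DecidableEq V] (a b : V) (K : Set (Finset V)) : Set (Finset V) :=
  {t | ∃ s ∈ K, t = s.image (cmap a b)}

/-- A missing simplex of `K`: not a simplex, but all proper subsets are simplices. -/
def Missing (K : Set (Finset V)) (m : Finset V) : Prop := m ∉ K ∧ ∀ t ⊂ m, t ∈ K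

/-- The stellar subdivision of `Δ` at `σ`, with new vertex `none`. -/
def stellar [DecidableEq V] (σ : Finset V) (Δ : Set (Finset V)) : Set (Finset (Option V)) :=
  {t | (∃ s ∈ Δ, ¬ σ ⊆ s ∧ t = s.image some) ∨
       (∃ τ ρ : Finset V, τ ⊂ σ ∧ ρ ∩ σ = ∅ ∧ σ ∪ ρ ∈ Δ ∧
         t = insert none ((τ ∪ ρ).image some))}

/-- The edge subdivision `S_e` at the edge `e = {a,b}` is the stellar subdivision at `e`. -/
def subdivEdge [DecidableEq V] (a b : V) (K : Set (Finset V)) : Set (Finset (Option V)) :=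
  stellar {a, b} K

/-- `s` is a facet (maximal simplex) of `K`. -/
def IsFacet (K : Set (Finset V)) (s : Finset V) : Prop :=
  s ∈ K ∧ ∀ t ∈ K, s ⊆ t → t = s

end Fary

namespace Fary

/-- if `Γ` is strongly induced in `Δ` and `e` is a valid edge of `Γ`,
then `C_e(Γ)` is strongly induced in `C_e(Δ)`. -/
theorem contract_stronglyInduced {V : Type*} [DecidableEq V] (Γ Δ : Set (Finset V))
    (hΓ : IsComplex Γ) (hΔ : IsComplex Δ) (hstr : StronglyInduced Γ Δ)
    (a b : V) (hab : a ≠ b) (he : ({a, b} : Finset V) ∈ Γ)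
    (hvalid : ¬ ∃ m : Finset V, Missing Γ m ∧ ({a, b} : Finset V) ⊆ m) :
    StronglyInduced (contract a b Γ) (contract a b Δ) := by
  classical
  obtain ⟨hsub, hst⟩ := hstr
  set f : V → V := cmap a b with hf
  have hfb : f b = a := by simp [hf, cmap]
  have hfne : ∀ x, x ≠ b → f x = x := by intro x hx; simp [hf, cmap, hx]
  have hfa : ∀ x, f x = a → x = a ∨ x = b := by
    intro x hx
    by_cases h : x = b
    · exact Or.inr h
    · rw [hfne x h] at hx; exact Or.inl hx
  have hfnea : ∀ x v, f x = v → v ≠ a → x = v := by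
    intro x v hx hv
    by_cases h : x = b
    · rw [h, hfb] at hx; exact absurd hx.symm hv
    · rw [hfne x h] at hx; exact hx
  have hfab : ∀ c, c = a ∨ c = b → f c = a := by
    rintro c (rfl | rfl)
    · exact hfne _ hab
    · exact hfb
  have haΓ : ({a} : Finset V) ∈ Γ := hΓ _ he _ (by simp)
  have hcΓ : ∀ c : V, c = a ∨ c = b → ({c} : Finset V) ∈ Γ := by
    rintro c (rfl | rfl)
    · exact haΓ
    · exact hΓ _ he _ (by simp)
  -- `Γ` is induced in `Δ`
  have induced : ∀ π ∈ Δ, (∀ v ∈ π, ({v} : Finset V) ∈ Γ) → π ∈ Γ := by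
    intro π hπΔ hv
    by_contra hπΓ
    obtain ⟨τ₁, hτ₁Γ, heq⟩ := hst π hπΔ hπΓ
    have hsubτ : π ⊆ τ₁ := by
      intro v hvπ
      have hm : ({v} : Finset V) ∈ Γ ∩ star π Δ :=
        ⟨hv v hvπ, ⟨π, hπΔ, subset_rfl, Finset.singleton_subset_iff.mpr hvπ⟩⟩
      rw [heq] at hm
      exact Finset.singleton_subset_iff.mp hm
    exact hπΓ (hΓ τ₁ hτ₁Γ π hsubτ)
  -- image of the filter of preimages
  have himg : ∀ (ρ t : Finset V), t ⊆ ρ.image f →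
      (ρ.filter (fun x => f x ∈ t)).image f = t := by
    intro ρ t ht
    ext v
    simp only [Finset.mem_image, Finset.mem_filter]
    constructor
    · rintro ⟨x, ⟨hx, hfx⟩, rfl⟩; exact hfx
    · intro hv
      obtain ⟨x, hx, hfx⟩ := Finset.mem_image.mp (ht hv)
      exact ⟨x, ⟨hx, hfx ▸ hv⟩, hfx⟩
  have hid : ∀ s : Finset V, b ∉ s → s.image f = s := by
    intro s hbs
    ext v
    simp only [Finset.mem_image]
    constructor
    · rintro ⟨x, hx, rfl⟩
      rw [hfne x (fun h => hbs (h ▸ hx))]; exact hx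
    · intro hv
      exact ⟨v, hv, hfne v (fun h => hbs (h ▸ hv))⟩
  constructor
  · rintro t ⟨s, hs, rfl⟩; exact ⟨s, hsub hs, rfl⟩
  · rintro σ' ⟨σ₀, hσ₀Δ, rfl⟩ hσ'
    set w : Finset V := (σ₀.image f).erase a with hw
    have hbσ' : b ∉ σ₀.image f := by
      intro h
      obtain ⟨x, hx, hfx⟩ := Finset.mem_image.mp h
      have hxb : x = b := hfnea x b hfx (Ne.symm hab)
      rw [hxb, hfb] at hfx
      exact hab hfx
    have haw : a ∉ w := Finset.notMem_erase a _
    have hbw : b ∉ w := fun h => hbσ' (Finset.mem_of_mem_erase h)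
    have hwsub : ∀ ρ : Finset V, (σ₀.image f) ⊆ ρ.image f → w ⊆ ρ := by
      intro ρ hρ v hv
      have hvσ' : v ∈ σ₀.image f := Finset.mem_of_mem_erase hv
      have hva : v ≠ a := Finset.ne_of_mem_erase hv
      obtain ⟨x, hx, hfx⟩ := Finset.mem_image.mp (hρ hvσ')
      exact (hfnea x v hfx hva) ▸ hx
    have hwσ₀ : w ⊆ σ₀ := by
      intro v hv
      have hvσ' : v ∈ σ₀.image f := Finset.mem_of_mem_erase hv
      have hva : v ≠ a := Finset.ne_of_mem_erase hv
      obtain ⟨x, hx, hfx⟩ := Finset.mem_image.mp hvσ'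
      exact (hfnea x v hfx hva) ▸ hx
    have hwΔ : w ∈ Δ := hΔ σ₀ hσ₀Δ w hwσ₀
    -- if a ∈ σ', a preimage vertex of a in σ₀
    have hcex : a ∈ σ₀.image f → ∃ c, (c = a ∨ c = b) ∧ c ∈ σ₀ := by
      intro h
      obtain ⟨x, hx, hfx⟩ := Finset.mem_image.mp h
      exact ⟨x, hfa x hfx, hx⟩
    have hwins : ∀ c, (c = a ∨ c = b) → c ∈ σ₀ → (insert c w).image f = σ₀.image f ∧
        insert c w ∈ Δ := by
      intro c hc hcσ₀
      have hsubσ₀ : insert c w ⊆ σ₀ := Finset.insert_subset hcσ₀ hwσ₀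
      have haσ' : a ∈ σ₀.image f := Finset.mem_image.mpr ⟨c, hcσ₀, hfab c hc⟩
      constructor
      · rw [Finset.image_insert, hfab c hc, hid w hbw, hw, Finset.insert_erase haσ']
      · exact hΔ σ₀ hσ₀Δ _ hsubσ₀
    have hwΓ : w ∉ Γ := by
      intro hwΓ
      apply hσ'
      by_cases ha : a ∈ σ₀.image f
      · obtain ⟨c, hc, hcσ₀⟩ := hcex ha
        obtain ⟨himg', hmemΔ⟩ := hwins c hc hcσ₀
        refine ⟨insert c w, ?_, himg'.symm⟩
        refine induced _ hmemΔ ?_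
        intro v hv
        rcases Finset.mem_insert.mp hv with rfl | hv
        · exact hcΓ v hc
        · exact hΓ w hwΓ _ (Finset.singleton_subset_iff.mpr hv)
      · have : w = σ₀.image f := by rw [hw, Finset.erase_eq_of_notMem ha]
        exact ⟨w, hwΓ, by rw [hid w hbw, this]⟩
    obtain ⟨τ, hτΓ, heq⟩ := hst w hwΔ hwΓ
    have hτmem : τ ∈ Γ ∩ star w Δ := by rw [heq]; exact show τ ⊆ τ from subset_rfl
    obtain ⟨ρ₀, hρ₀Δ, hwρ₀, hτρ₀⟩ := hτmem.2
    -- σ' ⊆ f(ρ₀)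
    have hσ'ρ₀ : σ₀.image f ⊆ ρ₀.image f := by
      intro v hv
      by_cases hva : v = a
      · subst hva
        obtain ⟨c, hc, hcσ₀⟩ := hcex hv
        have hcins : insert c w ∈ Δ := (hwins c hc hcσ₀).2
        have hcτ : ({c} : Finset V) ∈ Γ ∩ star w Δ :=
          ⟨hcΓ c hc, ⟨insert c w, hcins, Finset.subset_insert c w,
            Finset.singleton_subset_iff.mpr (Finset.mem_insert_self c w)⟩⟩
        rw [heq] at hcτ
        have hcρ₀ : c ∈ ρ₀ := hτρ₀ (Finset.singleton_subset_iff.mp hcτ)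
        exact Finset.mem_image.mpr ⟨c, hcρ₀, hfab c hc⟩
      · have hvw : v ∈ w := Finset.mem_erase.mpr ⟨hva, hv⟩
        exact Finset.mem_image.mpr ⟨v, hwρ₀ hvw, hfne v (fun h => hbw (h ▸ hvw))⟩
    refine ⟨τ.image f, ⟨τ, hτΓ, rfl⟩, ?_⟩
    ext t
    constructor
    · rintro ⟨⟨s, hsΓ, rfl⟩, ρ', ⟨ρ, hρΔ, rfl⟩, hσ'ρ, htρ⟩
      set s' : Finset V := ρ.filter (fun x => f x ∈ s.image f) with hs'
      have hs'img : s'.image f = s.image f := himg ρ _ htρ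
      have hs'ρ : s' ⊆ ρ := Finset.filter_subset _ _
      have hs'Γ : s' ∈ Γ := by
        refine induced s' (hΔ ρ hρΔ s' hs'ρ) ?_
        intro x hx
        by_cases hxab : x = a ∨ x = b
        · exact hcΓ x hxab
        · push_neg at hxab
          have hfx : f x ∈ s.image f := (Finset.mem_filter.mp hx).2
          obtain ⟨y, hy, hfy⟩ := Finset.mem_image.mp hfx
          rw [hfne x hxab.2] at hfy
          have : y = x := hfnea y x hfy hxab.1
          exact hΓ s hsΓ _ (Finset.singleton_subset_iff.mpr (this ▸ hy))
      have hs'star : s' ∈ Γ ∩ star w Δ := ⟨hs'Γ, ⟨ρ, hρΔ, hwsub ρ hσ'ρ, hs'ρ⟩⟩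
      rw [heq] at hs'star
      have : s' ⊆ τ := hs'star
      calc s.image f = s'.image f := hs'img.symm
        _ ⊆ τ.image f := Finset.image_subset_image this
    · intro ht
      have ht' : t ⊆ τ.image f := ht
      refine ⟨⟨τ.filter (fun x => f x ∈ t), hΓ τ hτΓ _ (Finset.filter_subset _ _),
        (himg τ t ht').symm⟩, ρ₀.image f, ⟨ρ₀, hρ₀Δ, rfl⟩, hσ'ρ₀,
        ht'.trans (Finset.image_subset_image hτρ₀)⟩

end Fary
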